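/- For every natural number n, every n-cylinder [v] and every (n+1)-cylinder [w] with [w] ⊆ [v] satisfy μ₀([w]) ≥ λ^{−(M+1)} · μ₀([v]) (bounded ratio geometry of the cylinder partitions). -/

import Mathlib

open MeasureTheory Real
open scoped ENNReal

variable {r : ℕ}

/-- The one-sided subshift of finite type determined by the transition
matrix `A`. -/
abbrev OneSided (A : Fin r → Fin r → Prop) : Type :=
  {x : ℕ → Fin r // ∀ i, A (x i) (x (i + 1))}

/-- The shift map `σ` on the one-sided subshift. -/
def shift1 {A : Fin r → Fin r → Prop} (x : OneSided A) : OneSided A :=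
  ⟨fun i => x.1 (i + 1), fun i => x.2 (i + 1)⟩

/-- The metric `d(x,y) = ∑_{i ∈ ℕ, x i ≠ y i} 2^{-i}` on the one-sided
subshift. -/
noncomputable def dist1 {A : Fin r → Fin r → Prop} (x y : OneSided A) : ℝ :=
  ∑' i : ℕ, if x.1 i ≠ y.1 i then ((2 : ℝ)⁻¹) ^ i else 0

/-- `ψ` is Hölder with respect to the distance function `d`. -/
def IsHolderWrt {X : Type*} (d : X → X → ℝ) (ψ : X → ℝ) : Prop :=
  ∃ C > 0, ∃ α ∈ Set.Ioc (0 : ℝ) 1, ∀ x y, |ψ x - ψ y| ≤ C * d x y ^ α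

/-- A word `w : Fin n → Fin r` is admissible if `A (w i) (w (i+1))` for all
`i < n − 1`. -/
def AdmissibleWord {n : ℕ} (A : Fin r → Fin r → Prop) (w : Fin n → Fin r) : Prop :=
  ∀ i : ℕ, ∀ h : i + 1 < n, A (w ⟨i, Nat.lt_of_succ_lt h⟩) (w ⟨i + 1, h⟩)

/-- The `n`-cylinder `[w]` of a word `w : Fin n → Fin r`. -/
def Cyl (A : Fin r → Fin r → Prop) {n : ℕ} (w : Fin n → Fin r) : Set (OneSided A) :=
  {x | ∀ i : Fin n, x.1 i = w i}

/-- `(P, μ)` is a conformal pair for `φ`: `μ` is a Borel probability measure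
with `μ(σ '' E) = ∫_E exp(P − φ) dμ` for every Borel `E` contained in a
1-cylinder.  This encodes `log(dμ(σx)/dμ(x)) = −φ(x) + P`. -/
def ConformalPair (A : Fin r → Fin r → Prop) (φ : OneSided A → ℝ) (P : ℝ)
    (μ : Measure (OneSided A)) : Prop :=
  IsProbabilityMeasure μ ∧
    ∀ (j : Fin r) (E : Set (OneSided A)), MeasurableSet E → (∀ x ∈ E, x.1 0 = j) →
      μ (shift1 '' E) = ∫⁻ x in E, ENNReal.ofReal (Real.exp (P - φ x)) ∂μ

/-- `Σ_A⁺` is transitive: some point has dense forward orbit under `σ`. -/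
def Transitive1 (A : Fin r → Fin r → Prop) : Prop :=
  ∃ x : OneSided A, Dense (Set.range fun n : ℕ => shift1^[n] x)

/-- `Σ_A⁺` is mixing with constant `M`: for all symbols `i`, `j` there is an
admissible word of length `M+1` beginning with `i` and ending with `j`. -/
def MixingWith (A : Fin r → Fin r → Prop) (M : ℕ) : Prop :=
  1 ≤ M ∧ ∀ i j : Fin r, ∃ w : Fin (M + 1) → Fin r,
    AdmissibleWord A w ∧ w 0 = i ∧ w (Fin.last M) = j



lemma measurableSet_cyl {A : Fin r → Fin r → Prop} {n : ℕ} (w : Fin n → Fin r) :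
    MeasurableSet (Cyl A w) := by
  have : Cyl A w = ⋂ i : Fin n, (fun x : OneSided A => x.1 i) ⁻¹' {w i} := by
    ext x; simp [Cyl, Set.mem_iInter]
  rw [this]
  exact MeasurableSet.iInter fun i =>
    (((measurable_pi_apply (i : ℕ)).comp measurable_subtype_coe) (measurableSet_singleton _))

/-- tail of a word -/
def wtail {n : ℕ} (w : Fin (n + 1) → Fin r) : Fin n → Fin r := fun i => w i.succ

lemma wtail_admissible {A : Fin r → Fin r → Prop} {n : ℕ} {w : Fin (n + 1) → Fin r}
    (hw : AdmissibleWord A w) : AdmissibleWord A (wtail w) := by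
  intro i h
  have h' : (i + 1) + 1 < n + 1 := Nat.succ_lt_succ h
  have := hw (i + 1) h'
  convert this using 2 <;> rfl 

lemma shift1_image_cyl {A : Fin r → Fin r → Prop} {n : ℕ} {w : Fin (n + 1 + 1) → Fin r}
    (hw : AdmissibleWord A w) :
    shift1 '' Cyl A w = Cyl A (wtail w) := by
  ext y
  constructor
  · rintro ⟨x, hx, rfl⟩
    intro i
    have := hx i.succ
    simpa [shift1, wtail, Fin.val_succ] using this
  · intro hy
    refine ⟨⟨fun k => Nat.casesOn k (w 0) (fun k' => y.1 k'), ?_⟩, ?_, ?_⟩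
    · intro i
      cases i with
      | zero =>
          have h1 : y.1 0 = w 1 := by
            have := hy ⟨0, Nat.succ_pos n⟩
            simpa [wtail, Fin.succ] using this
          simpa [h1] using hw 0 (by omega)
      | succ k => exact y.2 k
    · intro i
      rcases i with ⟨iv, hiv⟩
      cases iv with
      | zero => rfl
      | succ k =>
          have := hy ⟨k, by omega⟩
          simpa [wtail, Fin.succ] using this
    · apply Subtype.ext
      funext i
      rfl

lemma mem_cyl_fst_zero {A : Fin r → Fin r → Prop} {n : ℕ} {w : Fin (n + 1) → Fin r}
    {x : OneSided A} (hx : x ∈ Cyl A w) : x.1 0 = w 0 := by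
  have := hx 0
  simpa using this

/-- key scaling lemma -/
lemma cyl_scale {A : Fin r → Fin r → Prop} {P₀ : ℝ} {μ₀ : Measure (OneSided A)}
    (hpair₀ : ConformalPair A (fun _ => 0) P₀ μ₀) :
    ∀ (m : ℕ) (u : Fin (m + 1) → Fin r), AdmissibleWord A u →
      μ₀ (Cyl A (fun _ : Fin 1 => u (Fin.last m))) =
        ENNReal.ofReal (Real.exp P₀) ^ m * μ₀ (Cyl A u) := by
  intro m
  induction m with
  | zero =>
      intro u hu
      have : (fun _ : Fin 1 => u (Fin.last 0)) = u := by
        funext i; congr 1; omega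
      rw [this, pow_zero, one_mul]
  | succ m ih =>
      intro u hu
      have hconf := hpair₀.2 (u 0) (Cyl A u) (measurableSet_cyl u)
        (fun x hx => mem_cyl_fst_zero hx)
      rw [shift1_image_cyl hu] at hconf
      have hc : ∀ x : OneSided A, ENNReal.ofReal (Real.exp (P₀ - (fun _ => (0:ℝ)) x)) =
          ENNReal.ofReal (Real.exp P₀) := by intro x; simp
      have htail : μ₀ (Cyl A (wtail u)) = ENNReal.ofReal (Real.exp P₀) * μ₀ (Cyl A u) := by
        rw [hconf]
        simp [setLIntegral_const]
      have hlast : wtail u (Fin.last m) = u (Fin.last (m + 1)) := by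
        simp [wtail, Fin.succ_last]
      have := ih (wtail u) (wtail_admissible hu)
      rw [hlast] at this
      rw [this, htail, pow_succ]
      ring

lemma mem_cyl_single {A : Fin r → Fin r → Prop} {j : Fin r} {x : OneSided A} :
    x ∈ Cyl A (fun _ : Fin 1 => j) ↔ x.1 0 = j := by
  constructor
  · intro h; simpa using h 0
  · intro h k
    have : (k : ℕ) = 0 := by omega
    rw [this, h]

lemma one_le_scaled {A : Fin r → Fin r → Prop} {M : ℕ} (hmix : MixingWith A M)
    {P₀ : ℝ} {μ₀ : Measure (OneSided A)}
    (hpair₀ : ConformalPair A (fun _ => 0) P₀ μ₀) (i : Fin r) :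
    1 ≤ ENNReal.ofReal (Real.exp P₀) ^ M * μ₀ (Cyl A (fun _ : Fin 1 => i)) := by
  haveI := hpair₀.1
  set L := ENNReal.ofReal (Real.exp P₀) with hL
  choose u hadm h0 hlast using hmix.2 i
  have hcover : (Set.univ : Set (OneSided A)) = ⋃ j : Fin r, Cyl A (fun _ : Fin 1 => j) := by
    ext x
    simp only [Set.mem_univ, Set.mem_iUnion, true_iff]
    exact ⟨x.1 0, mem_cyl_single.2 rfl⟩
  have h1 : (1 : ℝ≥0∞) = μ₀ Set.univ := (measure_univ).symm
  have hstep : μ₀ Set.univ ≤ ∑' j : Fin r, μ₀ (Cyl A (fun _ : Fin 1 => j)) := by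
    rw [hcover]; exact measure_iUnion_le _
  have hscale : ∀ j, μ₀ (Cyl A (fun _ : Fin 1 => j)) = L ^ M * μ₀ (Cyl A (u j)) := by
    intro j
    have := cyl_scale hpair₀ M (u j) (hadm j)
    rwa [hlast j] at this
  have hdisj : Pairwise (Function.onFun Disjoint fun j : Fin r => Cyl A (u j)) := by
    intro j j' hjj'
    refine Set.disjoint_left.2 fun x hx hx' => hjj' ?_
    have e1 : x.1 (Fin.last M) = j := by rw [hx (Fin.last M), hlast j]
    have e2 : x.1 (Fin.last M) = j' := by rw [hx' (Fin.last M), hlast j']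
    rw [← e1, e2]
  have hunion : ∑' j : Fin r, μ₀ (Cyl A (u j)) = μ₀ (⋃ j, Cyl A (u j)) :=
    (measure_iUnion hdisj fun j => measurableSet_cyl (u j)).symm
  have hsubi : (⋃ j, Cyl A (u j)) ⊆ Cyl A (fun _ : Fin 1 => i) := by
    rintro x hx
    rcases Set.mem_iUnion.1 hx with ⟨j, hj⟩
    exact mem_cyl_single.2 (by rw [mem_cyl_fst_zero hj, h0 j])
  calc (1 : ℝ≥0∞) = μ₀ Set.univ := h1
    _ ≤ ∑' j : Fin r, μ₀ (Cyl A (fun _ : Fin 1 => j)) := hstep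
    _ = ∑' j : Fin r, L ^ M * μ₀ (Cyl A (u j)) := by simp_rw [hscale]
    _ = L ^ M * ∑' j : Fin r, μ₀ (Cyl A (u j)) := by rw [ENNReal.tsum_mul_left]
    _ = L ^ M * μ₀ (⋃ j, Cyl A (u j)) := by rw [hunion]
    _ ≤ L ^ M * μ₀ (Cyl A (fun _ : Fin 1 => i)) := by
        exact mul_le_mul_right (measure_mono hsubi) _

lemma scaled_le_L {A : Fin r → Fin r → Prop}
    {P₀ : ℝ} {μ₀ : Measure (OneSided A)}
    (hpair₀ : ConformalPair A (fun _ => 0) P₀ μ₀) (hlam : 1 < Real.exp P₀)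
    (n : ℕ) (v : Fin n → Fin r) (hv : AdmissibleWord A v) :
    ENNReal.ofReal (Real.exp P₀) ^ n * μ₀ (Cyl A v) ≤ ENNReal.ofReal (Real.exp P₀) := by
  haveI := hpair₀.1
  have hL1 : (1 : ℝ≥0∞) ≤ ENNReal.ofReal (Real.exp P₀) := by
    rw [show (1:ℝ≥0∞) = ENNReal.ofReal 1 by simp]
    exact ENNReal.ofReal_le_ofReal hlam.le
  cases n with
  | zero =>
      calc ENNReal.ofReal (Real.exp P₀) ^ 0 * μ₀ (Cyl A v) ≤ 1 * 1 := by
            exact mul_le_mul' (by rw [pow_zero]) prob_le_one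
        _ ≤ ENNReal.ofReal (Real.exp P₀) := by rwa [one_mul]
  | succ m =>
      have := cyl_scale hpair₀ m v hv
      calc ENNReal.ofReal (Real.exp P₀) ^ (m + 1) * μ₀ (Cyl A v)
          = ENNReal.ofReal (Real.exp P₀) * (ENNReal.ofReal (Real.exp P₀) ^ m * μ₀ (Cyl A v)) := by
            rw [pow_succ]; ring
        _ = ENNReal.ofReal (Real.exp P₀) * μ₀ (Cyl A (fun _ : Fin 1 => v (Fin.last m))) := by
            rw [← this]
        _ ≤ ENNReal.ofReal (Real.exp P₀) * 1 := mul_le_mul_right prob_le_one _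
        _ = ENNReal.ofReal (Real.exp P₀) := mul_one _


/-- (Bounded ratio geometry) For the conformal measure `μ₀` of the constant
function `0` with `λ = exp P₀ > 1` on a subshift mixing with constant `M`:
any `(n+1)`-cylinder `[w]` contained in an `n`-cylinder `[v]` satisfies
`μ₀([w]) ≥ λ^{−(M+1)} · μ₀([v])`. -/
theorem cylinder_measure_bounded_ratio
    {A : Fin r → Fin r → Prop} (M : ℕ) (hmix : MixingWith A M)
    (hcylne : ∀ (n : ℕ) (w : Fin n → Fin r), AdmissibleWord A w → (Cyl A w).Nonempty)
    (P₀ : ℝ) (μ₀ : Measure (OneSided A))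
    (hpair₀ : ConformalPair A (fun _ => 0) P₀ μ₀)
    (hlam : 1 < Real.exp P₀)
    (n : ℕ) (v : Fin n → Fin r) (w : Fin (n + 1) → Fin r)
    (hv : AdmissibleWord A v) (hw : AdmissibleWord A w)
    (hsub : Cyl A w ⊆ Cyl A v) :
    ENNReal.ofReal (Real.exp P₀ ^ (-((M : ℤ) + 1))) * μ₀ (Cyl A v) ≤ μ₀ (Cyl A w) := by
  set L := ENNReal.ofReal (Real.exp P₀) with hLdef
  have hexp_pos : (0:ℝ) < Real.exp P₀ := Real.exp_pos _
  have hL1 : (1 : ℝ≥0∞) < L := by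
    rw [hLdef, show (1:ℝ≥0∞) = ENNReal.ofReal 1 by simp]
    exact (ENNReal.ofReal_lt_ofReal_iff hexp_pos).2 hlam
  have hLne0 : L ≠ 0 := fun h => by simp [h] at hL1
  have hLnet : L ≠ ⊤ := ENNReal.ofReal_ne_top
  have hco : ENNReal.ofReal (Real.exp P₀ ^ (-((M:ℤ)+1))) = (L ^ (M+1))⁻¹ := by
    rw [show (-((M:ℤ)+1)) = -((M+1 : ℕ) : ℤ) by push_cast; ring, zpow_neg, zpow_natCast,
      ENNReal.ofReal_inv_of_pos (pow_pos hexp_pos _), hLdef,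
      ENNReal.ofReal_pow hexp_pos.le]
  have hscalew := cyl_scale hpair₀ n w hw
  have key : μ₀ (Cyl A v) ≤ L ^ (M + 1) * μ₀ (Cyl A w) := by
    have hchain : L ^ n * μ₀ (Cyl A v) ≤ L ^ n * (L ^ (M + 1) * μ₀ (Cyl A w)) := by
      calc L ^ n * μ₀ (Cyl A v) ≤ L := scaled_le_L hpair₀ hlam n v hv
        _ ≤ L * (L ^ M * μ₀ (Cyl A (fun _ : Fin 1 => w (Fin.last n)))) := by
            nth_rewrite 1 [← mul_one L]
            exact mul_le_mul_right (one_le_scaled hmix hpair₀ _) _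
        _ = L ^ (M + 1) * μ₀ (Cyl A (fun _ : Fin 1 => w (Fin.last n))) := by
            rw [pow_succ]; ring
        _ = L ^ (M + 1) * (L ^ n * μ₀ (Cyl A w)) := by rw [hscalew]
        _ = L ^ n * (L ^ (M + 1) * μ₀ (Cyl A w)) := by ring
    exact (ENNReal.mul_le_mul_iff_right (pow_ne_zero n hLne0)
      (ENNReal.pow_ne_top hLnet)).1 hchain
  rw [hco]
  calc (L ^ (M + 1))⁻¹ * μ₀ (Cyl A v)
      ≤ (L ^ (M + 1))⁻¹ * (L ^ (M + 1) * μ₀ (Cyl A w)) := mul_le_mul_right key _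
    _ = μ₀ (Cyl A w) := by
        rw [← mul_assoc, ENNReal.inv_mul_cancel (pow_ne_zero _ hLne0)
          (ENNReal.pow_ne_top hLnet), one_mul]
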